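/- Update step for the filter distribution: for every n ≥ 1, if 0 < μ_{n,n-1}(S^{n+1}) < ∞ and 0 < p_n < ∞ where p_n := ∫ g(y_n|x_n) π_{n|n-1}(dx_n), then π_n is absolutely continuous with respect to π_{n|n-1} with density x_n ↦ g(y_n|x_n)/p_n; i.e., π_n(dx_n) = π_{n|n-1}(dx_n) · g(y_n|x_n)/p_n. -/

import Mathlib

open MeasureTheory ProbabilityTheory
open scoped ENNReal NNReal

/-- Law of the first `n+1` steps `(X_0, …, X_n)` of a Markov chain with initial
distribution `π0` and transition kernel `P`. -/
noncomputable def chainLaw {S : Type*} [MeasurableSpace S] (π0 : Measure S)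
    (P : Kernel S S) : (n : ℕ) → Measure (Fin (n + 1) → S)
  | 0 => π0.map (fun x => fun _ => x)
  | n + 1 => (chainLaw π0 P n).bind (fun x => (P (x (Fin.last n))).map (Fin.snoc x))

open Fin.NatCast in
/-- The finite measure `μ_{n,m}(dx_{0:n}) = π0(dx_0) ∏_{t=1}^n P(dx_t|x_{t-1})
∏_{t=1}^m g(y_t|x_t)` on `S^{n+1}`. -/
noncomputable def ssmMu {S : Type*} [MeasurableSpace S] {d : ℕ} (π0 : Measure S)
    (P : Kernel S S) (g : (Fin d → ℝ) → S → ℝ) (y : ℕ → Fin d → ℝ) (n m : ℕ) :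
    Measure (Fin (n + 1) → S) :=
  (chainLaw π0 P n).withDensity
    (fun x => ∏ t ∈ Finset.Icc 1 m, ENNReal.ofReal (g (y t) (x (t : Fin (n + 1)))))

/-- The conditional distribution `π_{0:n|m}`, i.e. `μ_{n,m}` normalized to a
probability measure. -/
noncomputable def ssmPi {S : Type*} [MeasurableSpace S] {d : ℕ} (π0 : Measure S)
    (P : Kernel S S) (g : (Fin d → ℝ) → S → ℝ) (y : ℕ → Fin d → ℝ) (n m : ℕ) :
    Measure (Fin (n + 1) → S) :=
  (ssmMu π0 P g y n m Set.univ)⁻¹ • ssmMu π0 P g y n m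

/-- The marginal `π_{n|m}` of `π_{0:n|m}` in the last coordinate `x_n`. -/
noncomputable def ssmPiMarg {S : Type*} [MeasurableSpace S] {d : ℕ} (π0 : Measure S)
    (P : Kernel S S) (g : (Fin d → ℝ) → S → ℝ) (y : ℕ → Fin d → ℝ) (n m : ℕ) :
    Measure S :=
  (ssmPi π0 P g y n m).map (fun x => x (Fin.last n))

/-- **Update step for the filter distribution.**
For every `n ≥ 1` (here the paper's `n` is `n+1`), if `0 < μ_{n,n-1}(S^{n+1}) < ∞`
and `0 < p_n < ∞` where `p_n = ∫ g(y_n|x_n) π_{n|n-1}(dx_n)`, then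
`π_n(dx_n) = π_{n|n-1}(dx_n) · g(y_n|x_n)/p_n`. -/
theorem filter_update_step {S : Type*} [MeasurableSpace S] {d : ℕ}
    (π0 : Measure S) [IsProbabilityMeasure π0] (P : Kernel S S) [IsMarkovKernel P]
    (g : (Fin d → ℝ) → S → ℝ) (hg0 : ∀ y x, 0 ≤ g y x) (hgm : ∀ y, Measurable (g y))
    (ν : Measure (Fin d → ℝ)) [SigmaFinite ν] (y : ℕ → Fin d → ℝ) (n : ℕ)
    (hpos : 0 < ssmMu π0 P g y (n + 1) n Set.univ)
    (hfin : ssmMu π0 P g y (n + 1) n Set.univ < ⊤)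
    (p : ℝ≥0∞)
    (hp : p = ∫⁻ x, ENNReal.ofReal (g (y (n + 1)) x) ∂(ssmPiMarg π0 P g y (n + 1) n))
    (hp0 : 0 < p) (hpfin : p < ⊤) :
    ssmPiMarg π0 P g y (n + 1) (n + 1) =
      (ssmPiMarg π0 P g y (n + 1) n).withDensity
        (fun x => ENNReal.ofReal (g (y (n + 1)) x) / p) := by
  classical
  set μ := ssmMu π0 P g y (n + 1) n with hμ
  set c := ssmMu π0 P g y (n + 1) n Set.univ with hc
  have hlast : Measurable (fun x : Fin (n + 1 + 1) → S => x (Fin.last (n + 1))) :=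
    measurable_pi_apply _
  set f : S → ℝ≥0∞ := fun x => ENNReal.ofReal (g (y (n + 1)) x) with hf
  have hfm : Measurable f := (hgm _).ennreal_ofReal
  have hlastf : Measurable (fun x : Fin (n + 1 + 1) → S => f (x (Fin.last (n + 1)))) :=
    hfm.comp hlast
  open Fin.NatCast in
  have hprodm : Measurable fun x : Fin (n + 1 + 1) → S =>
      ∏ t ∈ Finset.Icc 1 n, ENNReal.ofReal (g (y t) (x (t : Fin (n + 1 + 1)))) := by
    exact Finset.measurable_prod _ fun t _ =>
      ((hgm _).comp (measurable_pi_apply _)).ennreal_ofReal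
  have hsplit : ssmMu π0 P g y (n + 1) (n + 1)
      = μ.withDensity (fun x => f (x (Fin.last (n + 1)))) := by
    open Fin.NatCast in
    have hfun : (fun x : Fin (n + 1 + 1) → S =>
          ∏ t ∈ Finset.Icc 1 (n + 1), ENNReal.ofReal (g (y t) (x (t : Fin (n + 1 + 1)))))
        = (fun x : Fin (n + 1 + 1) → S =>
            ∏ t ∈ Finset.Icc 1 n, ENNReal.ofReal (g (y t) (x (t : Fin (n + 1 + 1)))))
          * (fun x => f (x (Fin.last (n + 1)))) := by
      funext x
      rw [Finset.prod_Icc_succ_top (Nat.le_add_left 1 n), Pi.mul_apply, hf]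
      congr 2
      rw [Fin.natCast_eq_last]
    rw [hμ]
    unfold ssmMu
    rw [hfun, withDensity_mul _ hprodm hlastf]
  have hc0 : c ≠ 0 := hpos.ne'
  have hcfin : c ≠ ⊤ := hfin.ne
  have hmass : ssmMu π0 P g y (n + 1) (n + 1) Set.univ = p * c := by
    rw [hsplit, withDensity_apply _ MeasurableSet.univ, hp]
    unfold ssmPiMarg ssmPi
    rw [lintegral_map hfm hlast, lintegral_smul_measure, Measure.restrict_univ, ← hμ, ← hc,
      mul_comm, smul_eq_mul, ← mul_assoc, ENNReal.mul_inv_cancel hc0 hcfin, one_mul]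
  have hmapwd : (μ.withDensity (fun x => f (x (Fin.last (n + 1))))).map
        (fun x => x (Fin.last (n + 1)))
      = (μ.map (fun x => x (Fin.last (n + 1)))).withDensity f := by
    ext s hs
    rw [Measure.map_apply hlast hs, withDensity_apply _ (hlast hs), withDensity_apply _ hs,
      setLIntegral_map hs hfm hlast]
  have hdiv : (fun x => ENNReal.ofReal (g (y (n + 1)) x) / p) = p⁻¹ • f := by
    funext x
    simp [hf, ENNReal.div_eq_inv_mul]
  unfold ssmPiMarg ssmPi
  rw [hsplit] at hmass ⊢
  rw [hmass, ← hμ, ← hc, Measure.map_smul, hmapwd, Measure.map_smul,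
    withDensity_smul_measure, hdiv, withDensity_smul _ hfm, smul_smul]
  congr 1
  rw [ENNReal.mul_inv (Or.inl hp0.ne') (Or.inl hpfin.ne), mul_comm]
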